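/- Let (A,B) be a seed of type (n,k). Then the seed map T_{n,k} is well defined on (A,B): in each step of the construction the two relevant lines are distinct and non-parallel, so each point B*_j (j = n,…,n−k+1) is the unique point of ℝ² lying on both lines; and the resulting configuration (A*,B*) is again a seed of type (n,k) (the points A*_1,…,A*_n are in strictly convex position in counterclockwise cyclic order and each B*_j lies in the open segment between A*_j and A*_{j+1}). -/

import Mathlib

/-- Planar determinant (cross product) of two vectors of `ℝ²`. -/
def det2 (u v : ℝ × ℝ) : ℝ := u.1 * v.2 - u.2 * v.1

/-- Counterclockwise orientation of an ordered triple of points of `ℝ²`. -/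
def ccw (a b c : ℝ × ℝ) : Prop := 0 < det2 (b - a) (c - a)

/-- The (1-indexed) points `A 1, …, A n` are in strictly convex position in this
(counterclockwise) cyclic order: every triple taken in cyclic order is
counterclockwise. -/
def ConvexCyc (n : ℕ) (A : ℕ → ℝ × ℝ) : Prop :=
  ∀ i j l : ℕ, 1 ≤ i → i < j → j < l → l ≤ n → ccw (A i) (A j) (A l)

/-- A seed of type `(n,k)`: the points `A 1, …, A n` are in strictly convex position
in counterclockwise cyclic order, and for `j = n-k+1, …, n` the point `B j` lies in
the open segment between `A j` and `A (j+1)` (indices mod `n`, so `A (n+1) = A 1`;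
note `j % n + 1` equals `j + 1` for `j < n` and equals `1` for `j = n`).
Only the values `A 1, …, A n` and `B (n-k+1), …, B n` are relevant. -/
def IsSeed (n k : ℕ) (A B : ℕ → ℝ × ℝ) : Prop :=
  ConvexCyc n A ∧
    ∀ j : ℕ, n - k + 1 ≤ j → j ≤ n →
      ∃ t ∈ Set.Ioo (0 : ℝ) 1, B j = A j + t • (A (j % n + 1) - A j)

/-- The point `p` lies on the line through `a` and `b`. -/
def onLine (a b p : ℝ × ℝ) : Prop := det2 (b - a) (p - a) = 0

/-- The intersection point of the line through `a`, `b` with the line through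
`c`, `d` (when the two lines are non-parallel). -/
noncomputable def lineInter (a b c d : ℝ × ℝ) : ℝ × ℝ :=
  a + (det2 (c - a) (d - c) / det2 (b - a) (d - c)) • (b - a)

/-- Auxiliary descending recursion producing the points `B*`: `BstAux n A Astar d`
is the point `B*_(n-d)`.  For `d = 0`, `B*_n` is the intersection of the line
through `A 1` and `A*_2` with the line through `A*_n` and `A*_1`; descending,
`B*_j` (`j = n - d - 1`) is the intersection of the line through `A (j+1)` and
`B*_(j+1)` with the line through `A*_j` and `A*_(j+1)`. -/
noncomputable def BstAux (n : ℕ) (A Astar : ℕ → ℝ × ℝ) : ℕ → ℝ × ℝ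
  | 0 => lineInter (A 1) (Astar 2) (Astar n) (Astar 1)
  | d + 1 => lineInter (A (n - d)) (BstAux n A Astar d) (Astar (n - d - 1)) (Astar (n - d))

/-- The seed map `T_{n,k}`, sending the configuration `(A, B)` to `(A*, B*)`:
`A*_i = A_(i+1)` for `i = 1, …, n-k`; `A*_i = B_i` for `i = n-k+1, …, n`; and the
points `B*_j`, `j = n, n-1, …, n-k+1`, are produced by the descending intersection
recursion `BstAux`. -/
noncomputable def seedMap (n k : ℕ) (S : (ℕ → ℝ × ℝ) × (ℕ → ℝ × ℝ)) :
    (ℕ → ℝ × ℝ) × (ℕ → ℝ × ℝ) :=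
  let Astar : ℕ → ℝ × ℝ := fun i => if i ≤ n - k then S.1 (i + 1) else S.2 i
  (Astar, fun j => BstAux n S.1 Astar (n - j))

namespace SeedAux

def segp (X Y : ℝ × ℝ) (s : ℝ) : ℝ × ℝ := X + s • (Y - X)
def det3 (a b c : ℝ × ℝ) : ℝ := det2 (b - a) (c - a)

section simps
variable (a b c X Y : ℝ × ℝ) (s t u : ℝ)

lemma det3_rot : det3 a b c = det3 b c a := by
  simp only [det3, det2, Prod.fst_sub, Prod.snd_sub]; ring

lemma det3_rot2 : det3 a b c = det3 c a b := by
  simp only [det3, det2, Prod.fst_sub, Prod.snd_sub]; ring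

lemma det3_swap23 : det3 a b c = -det3 a c b := by
  simp only [det3, det2, Prod.fst_sub, Prod.snd_sub]; ring

lemma det3_aab : det3 a a b = 0 := by
  simp only [det3, det2, Prod.fst_sub, Prod.snd_sub]; ring

lemma det3_abb : det3 a b b = 0 := by
  simp only [det3, det2, Prod.fst_sub, Prod.snd_sub]; ring

lemma det3_aba : det3 a b a = 0 := by
  simp only [det3, det2, Prod.fst_sub, Prod.snd_sub]; ring

lemma det3_seg1 : det3 (segp X Y s) b c = (1 - s) * det3 X b c + s * det3 Y b c := by
  simp only [det3, det2, segp, Prod.fst_sub, Prod.snd_sub, Prod.fst_add, Prod.snd_add,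
    Prod.smul_fst, Prod.smul_snd, smul_eq_mul]; ring

lemma det3_seg2 : det3 a (segp X Y t) c = (1 - t) * det3 a X c + t * det3 a Y c := by
  simp only [det3, det2, segp, Prod.fst_sub, Prod.snd_sub, Prod.fst_add, Prod.snd_add,
    Prod.smul_fst, Prod.smul_snd, smul_eq_mul]; ring

lemma det3_seg3 : det3 a b (segp X Y u) = (1 - u) * det3 a b X + u * det3 a b Y := by
  simp only [det3, det2, segp, Prod.fst_sub, Prod.snd_sub, Prod.fst_add, Prod.snd_add,
    Prod.smul_fst, Prod.smul_snd, smul_eq_mul]; ring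

lemma det3_seg12 : det3 (segp X Y s) (segp X Y t) c = (t - s) * det3 X Y c := by
  simp only [det3, det2, segp, Prod.fst_sub, Prod.snd_sub, Prod.fst_add, Prod.snd_add,
    Prod.smul_fst, Prod.smul_snd, smul_eq_mul]; ring

lemma det2_eq_det3_sub : det2 (b - a) (c - X) = det3 a b c - det3 a b X := by
  simp only [det3, det2, Prod.fst_sub, Prod.snd_sub]; ring

end simps

lemma comb_nonneg {d1 d2 u : ℝ} (h1 : 0 ≤ d1) (h2 : 0 ≤ d2) (hu0 : 0 ≤ u) (hu1 : u ≤ 1) :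
    0 ≤ (1 - u) * d1 + u * d2 := by nlinarith

lemma comb_pos {d1 d2 u : ℝ} (h1 : 0 < d1) (h2 : 0 ≤ d2) (hu0 : 0 ≤ u) (hu1 : u < 1) :
    0 < (1 - u) * d1 + u * d2 := by nlinarith

lemma comb_pos' {d1 d2 u : ℝ} (h1 : 0 ≤ d1) (h2 : 0 < d2) (hu0 : 0 < u) (hu1 : u ≤ 1) :
    0 < (1 - u) * d1 + u * d2 := by nlinarith

lemma det2_zero_unique {u v w : ℝ × ℝ} (hu : det2 u w = 0) (hv : det2 v w = 0)
    (huv : det2 u v ≠ 0) : w = 0 := by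
  simp only [det2] at hu hv huv
  have h1 : w.1 * (u.1 * v.2 - u.2 * v.1) = 0 := by linear_combination v.1 * hu - u.1 * hv
  have h2 : w.2 * (u.1 * v.2 - u.2 * v.1) = 0 := by linear_combination v.2 * hu - u.2 * hv
  have e1 : w.1 = 0 := by
    rcases mul_eq_zero.1 h1 with h | h
    · exact h
    · exact absurd h huv
  have e2 : w.2 = 0 := by
    rcases mul_eq_zero.1 h2 with h | h
    · exact h
    · exact absurd h huv
  exact Prod.ext e1 e2

lemma lineInter_onLines (a b c d : ℝ × ℝ) (hD : det2 (b - a) (d - c) ≠ 0) :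
    onLine a b (lineInter a b c d) ∧ onLine c d (lineInter a b c d) := by
  constructor
  · simp only [onLine, lineInter, det2, Prod.fst_sub, Prod.snd_sub, Prod.fst_add, Prod.snd_add,
      Prod.smul_fst, Prod.smul_snd, smul_eq_mul]
    ring
  · simp only [onLine, lineInter, det2, Prod.fst_sub, Prod.snd_sub, Prod.fst_add, Prod.snd_add,
      Prod.smul_fst, Prod.smul_snd, smul_eq_mul]
    simp only [det2, Prod.fst_sub, Prod.snd_sub] at hD
    linear_combination (-((c.1 - a.1) * (d.2 - c.2) - (c.2 - a.2) * (d.1 - c.1))) * inv_mul_cancel₀ hD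

lemma lineInter_unique (a b c d : ℝ × ℝ) (hD : det2 (b - a) (d - c) ≠ 0) (P : ℝ × ℝ) :
    (onLine a b P ∧ onLine c d P) ↔ P = lineInter a b c d := by
  obtain ⟨h1, h2⟩ := lineInter_onLines a b c d hD
  constructor
  · rintro ⟨hP1, hP2⟩
    have e1 : det2 (b - a) (P - lineInter a b c d) = 0 := by
      have : det2 (b - a) (P - lineInter a b c d)
          = det2 (b - a) (P - a) - det2 (b - a) (lineInter a b c d - a) := by
        simp only [det2, Prod.fst_sub, Prod.snd_sub]; ring
      rw [this, hP1, h1]; ring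
    have e2 : det2 (d - c) (P - lineInter a b c d) = 0 := by
      have : det2 (d - c) (P - lineInter a b c d)
          = det2 (d - c) (P - c) - det2 (d - c) (lineInter a b c d - c) := by
        simp only [det2, Prod.fst_sub, Prod.snd_sub]; ring
      rw [this, hP2, h2]; ring
    have hbd : det2 (b - a) (d - c) ≠ 0 := hD
    have := det2_zero_unique e1 e2 hbd
    have := sub_eq_zero.1 this
    exact this
  · rintro rfl; exact ⟨h1, h2⟩

lemma lineInter_seg (a b c d : ℝ × ℝ) (h : det3 a b c * det3 a b d < 0) :
    det2 (b - a) (d - c) ≠ 0 ∧ ∃ t, t ∈ Set.Ioo (0:ℝ) 1 ∧ lineInter a b c d = segp c d t := by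
  have hDd : det2 (b - a) (d - c) = det3 a b d - det3 a b c := det2_eq_det3_sub a b d c
  set fc := det3 a b c with hfc
  set fd := det3 a b d with hfd
  have hfc0 : fc ≠ 0 := by intro h0; rw [h0] at h; simp at h
  have hne : fc - fd ≠ 0 := by
    intro h0
    have he : fc = fd := by linarith
    rw [he] at h
    linarith [mul_self_nonneg fd]
  have hD : det2 (b - a) (d - c) ≠ 0 := by rw [hDd]; intro h0; apply hne; linarith
  refine ⟨hD, fc / (fc - fd), ⟨?_, ?_⟩, ?_⟩
  · rcases hfc0.lt_or_gt with hc | hc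
    · have hd : 0 < fd := by nlinarith
      have : fc - fd < 0 := by linarith
      exact div_pos_of_neg_of_neg hc this
    · have hd : fd < 0 := by nlinarith
      exact div_pos hc (by linarith)
  · rcases hfc0.lt_or_gt with hc | hc
    · have hd : 0 < fd := by nlinarith
      rw [div_lt_one_of_neg (by linarith)]
      linarith
    · have hd : fd < 0 := by nlinarith
      rw [div_lt_one (by linarith)]
      linarith
  · have hseg : onLine a b (segp c d (fc / (fc - fd))) ∧ onLine c d (segp c d (fc / (fc - fd))) := by
      constructor
      · have expand : det2 (b - a) (segp c d (fc / (fc - fd)) - a)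
            = fc + (fc / (fc - fd)) * (fd - fc) := by
          simp only [hfc, hfd, det3, det2, segp, Prod.fst_sub, Prod.snd_sub, Prod.fst_add,
            Prod.snd_add, Prod.smul_fst, Prod.smul_snd, smul_eq_mul]
          ring
        show det2 (b - a) (segp c d (fc / (fc - fd)) - a) = 0
        rw [expand]; field_simp; ring
      · show det2 (d - c) (segp c d (fc / (fc - fd)) - c) = 0
        simp only [segp, det2, Prod.fst_sub, Prod.snd_sub, Prod.fst_add, Prod.snd_add,
          Prod.smul_fst, Prod.smul_snd, smul_eq_mul]
        ring
    exact ((lineInter_unique a b c d hD _).1 hseg).symm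

end SeedAux
namespace SeedAux

def Aw (n : ℕ) (A : ℕ → ℝ × ℝ) (q : ℕ) : ℝ × ℝ := A ((q - 1) % n + 1)

section Awfacts
variable {n : ℕ} {A : ℕ → ℝ × ℝ}

lemma Aw_eq (hn : 1 ≤ n) {q : ℕ} (h1 : 1 ≤ q) (h2 : q ≤ n) : Aw n A q = A q := by
  unfold Aw
  congr 1
  have : q - 1 < n := by omega
  rw [Nat.mod_eq_of_lt this]
  omega

lemma Aw_eq' (hn : 1 ≤ n) {q : ℕ} (h1 : n < q) (h2 : q ≤ 2 * n) : Aw n A q = A (q - n) := by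
  unfold Aw
  congr 1
  have e : q - 1 = (q - 1 - n) + n := by omega
  rw [e, Nat.add_mod_right]
  have : q - 1 - n < n := by omega
  rw [Nat.mod_eq_of_lt this]
  omega

lemma Aw_shift {q : ℕ} (hq : 1 ≤ q) : Aw n A (q + n) = Aw n A q := by
  unfold Aw
  congr 1
  have e : q + n - 1 = (q - 1) + n := by omega
  rw [e, Nat.add_mod_right]

lemma detAw_pos (hA : ConvexCyc n A) (hn : 1 ≤ n) :
    ∀ u v w : ℕ, 1 ≤ u → u < v → v < w → w < u + n →
      0 < det3 (Aw n A u) (Aw n A v) (Aw n A w) := by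
  intro u
  induction u using Nat.strong_induction_on with
  | _ u IH =>
    intro v w h1 h2 h3 h4
    by_cases hu : u ≤ n
    · by_cases hv : v ≤ n
      · by_cases hw : w ≤ n
        · rw [Aw_eq hn h1 hu, Aw_eq hn (by omega) hv, Aw_eq hn (by omega) hw]
          exact hA u v w h1 h2 h3 hw
        · rw [Aw_eq hn h1 hu, Aw_eq hn (by omega) hv, Aw_eq' hn (by omega) (by omega)]
          have h := hA (w - n) u v (by omega) (by omega) h2 hv
          rw [det3_rot2]
          exact h
      · -- n < v < w
        rw [Aw_eq hn h1 hu, Aw_eq' hn (by omega) (by omega), Aw_eq' hn (by omega) (by omega)]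
        have h := hA (v - n) (w - n) u (by omega) (by omega) (by omega) hu
        rw [det3_rot]
        exact h
    · have e1 : Aw n A u = Aw n A (u - n) := by
        conv_lhs => rw [show u = (u - n) + n by omega]
        exact Aw_shift (by omega)
      have e2 : Aw n A v = Aw n A (v - n) := by
        conv_lhs => rw [show v = (v - n) + n by omega]
        exact Aw_shift (by omega)
      have e3 : Aw n A w = Aw n A (w - n) := by
        conv_lhs => rw [show w = (w - n) + n by omega]
        exact Aw_shift (by omega)
      rw [e1, e2, e3]
      exact IH (u - n) (by omega) (v - n) (w - n) (by omega) (by omega) (by omega) (by omega)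

lemma detAw_nonneg (hA : ConvexCyc n A) (hn : 1 ≤ n) :
    ∀ u v w : ℕ, 1 ≤ u → u ≤ v → v ≤ w → w ≤ u + n →
      0 ≤ det3 (Aw n A u) (Aw n A v) (Aw n A w) := by
  intro u v w h1 h2 h3 h4
  rcases eq_or_lt_of_le h2 with he | h2'
  · rw [← he, det3_aab]
  rcases eq_or_lt_of_le h3 with he | h3'
  · rw [he, det3_abb]
  rcases eq_or_lt_of_le h4 with he | h4'
  · have : Aw n A w = Aw n A u := by rw [he, Aw_shift h1]
    rw [this, det3_aba]
  exact le_of_lt (detAw_pos hA hn u v w h1 h2' h3' h4')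

lemma tri_pos (hA : ConvexCyc n A) (hn : 4 ≤ n)
    (x y z : ℕ) (s t u : ℝ)
    (hx : 1 ≤ x) (hxy : x ≤ y) (hyz : y ≤ z) (hzx : z < x + n)
    (hs0 : 0 ≤ s) (hs1 : s < 1) (ht0 : 0 ≤ t) (ht1 : t < 1) (hu0 : 0 ≤ u) (hu1 : u < 1)
    (h1 : x < y ∨ s < t) (h2 : y < z ∨ t < u)
    (h3 : x + 1 < z ∨ (z = x + 1 ∧ 0 < u))
    (h4 : z + 1 < x + n ∨ (z + 1 = x + n ∧ 0 < s)) :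
    0 < det3 (segp (Aw n A x) (Aw n A (x+1)) s) (segp (Aw n A y) (Aw n A (y+1)) t)
        (segp (Aw n A z) (Aw n A (z+1)) u) := by
  have hn1 : 1 ≤ n := by omega
  rcases eq_or_lt_of_le hxy with hexy | hxy'
  · -- x = y
    subst hexy
    have hst : s < t := h1.resolve_left (by omega)
    have hxz : x < z := by
      rcases h3 with h | h
      · omega
      · omega
    rw [det3_seg3, det3_seg12, det3_seg12]
    have hexpr : (1 - u) * ((t - s) * det3 (Aw n A x) (Aw n A (x+1)) (Aw n A z))
        + u * ((t - s) * det3 (Aw n A x) (Aw n A (x+1)) (Aw n A (z+1)))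
        = (t - s) * ((1 - u) * det3 (Aw n A x) (Aw n A (x+1)) (Aw n A z)
          + u * det3 (Aw n A x) (Aw n A (x+1)) (Aw n A (z+1))) := by ring
    rw [hexpr]
    apply mul_pos (by linarith)
    rcases h3 with h | ⟨hz, hu⟩
    · have d1 : 0 < det3 (Aw n A x) (Aw n A (x+1)) (Aw n A z) :=
        detAw_pos hA hn1 x (x+1) z hx (by omega) h hzx
      have d2 : 0 ≤ det3 (Aw n A x) (Aw n A (x+1)) (Aw n A (z+1)) :=
        detAw_nonneg hA hn1 x (x+1) (z+1) hx (by omega) (by omega) (by omega)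
      exact comb_pos d1 d2 hu0 hu1
    · subst hz
      have d1 : det3 (Aw n A x) (Aw n A (x+1)) (Aw n A (x+1)) = 0 := det3_abb _ _
      have d2 : 0 < det3 (Aw n A x) (Aw n A (x+1)) (Aw n A (x+1+1)) :=
        detAw_pos hA hn1 x (x+1) (x+2) hx (by omega) (by omega) (by omega)
      rw [d1]
      exact comb_pos' (le_refl 0) d2 hu (le_of_lt hu1)
  rcases eq_or_lt_of_le hyz with heyz | hyz'
  · -- y = z
    subst heyz
    have htu : t < u := h2.resolve_left (by omega)
    rw [det3_rot, det3_seg12, det3_seg3]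
    apply mul_pos (by linarith)
    rcases h4 with h | ⟨hzz, hs⟩
    · have d1 : 0 < det3 (Aw n A y) (Aw n A (y+1)) (Aw n A x) := by
        rw [det3_rot2]
        exact detAw_pos hA hn1 x y (y+1) hx hxy' (by omega) h
      have d2 : 0 ≤ det3 (Aw n A y) (Aw n A (y+1)) (Aw n A (x+1)) := by
        rw [det3_rot2]
        exact detAw_nonneg hA hn1 (x+1) y (y+1) (by omega) (by omega) (by omega) (by omega)
      exact comb_pos d1 d2 hs0 hs1
    · have e1 : Aw n A (y+1) = Aw n A x := by
        rw [show y + 1 = x + n from hzz]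
        exact Aw_shift hx
      rw [e1]
      have d1 : det3 (Aw n A y) (Aw n A x) (Aw n A x) = 0 := det3_abb _ _
      have d2 : 0 < det3 (Aw n A y) (Aw n A x) (Aw n A (x+1)) := by
        rw [det3_rot]
        exact detAw_pos hA hn1 x (x+1) y hx (by omega) (by omega) (by omega)
      rw [d1]
      exact comb_pos' (le_refl 0) d2 hs (le_of_lt hs1)
  · -- x < y < z
    rw [det3_seg3]
    have hz : 0 < det3 (segp (Aw n A x) (Aw n A (x+1)) s) (segp (Aw n A y) (Aw n A (y+1)) t)
        (Aw n A z) := by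
      rw [det3_seg1, det3_seg2, det3_seg2]
      have dxyz : 0 < det3 (Aw n A x) (Aw n A y) (Aw n A z) :=
        detAw_pos hA hn1 x y z hx hxy' hyz' hzx
      have dxy1z : 0 ≤ det3 (Aw n A x) (Aw n A (y+1)) (Aw n A z) :=
        detAw_nonneg hA hn1 x (y+1) z hx (by omega) (by omega) (by omega)
      have dx1yz : 0 ≤ det3 (Aw n A (x+1)) (Aw n A y) (Aw n A z) :=
        detAw_nonneg hA hn1 (x+1) y z (by omega) (by omega) (by omega) (by omega)
      have dx1y1z : 0 ≤ det3 (Aw n A (x+1)) (Aw n A (y+1)) (Aw n A z) :=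
        detAw_nonneg hA hn1 (x+1) (y+1) z (by omega) (by omega) (by omega) (by omega)
      exact comb_pos (comb_pos dxyz dxy1z ht0 ht1)
        (comb_nonneg dx1yz dx1y1z ht0 (le_of_lt ht1)) hs0 hs1
    have hz1 : 0 ≤ det3 (segp (Aw n A x) (Aw n A (x+1)) s) (segp (Aw n A y) (Aw n A (y+1)) t)
        (Aw n A (z+1)) := by
      rw [det3_seg1, det3_seg2, det3_seg2]
      have d1 : 0 ≤ det3 (Aw n A x) (Aw n A y) (Aw n A (z+1)) :=
        detAw_nonneg hA hn1 x y (z+1) hx (by omega) (by omega) (by omega)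
      have d2 : 0 ≤ det3 (Aw n A x) (Aw n A (y+1)) (Aw n A (z+1)) :=
        detAw_nonneg hA hn1 x (y+1) (z+1) hx (by omega) (by omega) (by omega)
      have d3 : 0 ≤ det3 (Aw n A (x+1)) (Aw n A y) (Aw n A (z+1)) :=
        detAw_nonneg hA hn1 (x+1) y (z+1) (by omega) (by omega) (by omega) (by omega)
      have d4 : 0 ≤ det3 (Aw n A (x+1)) (Aw n A (y+1)) (Aw n A (z+1)) :=
        detAw_nonneg hA hn1 (x+1) (y+1) (z+1) (by omega) (by omega) (by omega) (by omega)
      exact comb_nonneg (comb_nonneg d1 d2 ht0 (le_of_lt ht1))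
        (comb_nonneg d3 d4 ht0 (le_of_lt ht1)) hs0 (le_of_lt hs1)
    exact comb_pos hz hz1 hu0 hu1

end Awfacts
end SeedAux

open SeedAux

/-- **The seed map is well defined and carries seeds to seeds.**  For a seed `(A,B)`
of type `(n,k)`, in each step of the construction of `T_{n,k}(A,B) = (A*,B*)` the two
relevant lines are given by distinct point pairs and are non-parallel, and `B*_j` is
the unique point of `ℝ²` lying on both lines; moreover `(A*,B*)` is again a seed of
type `(n,k)`. -/
theorem seedMap_wellDefined_and_isSeed (n k : ℕ) (hn : 4 ≤ n) (hk1 : 1 ≤ k)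
    (hkn : k ≤ n - 1) (A B : ℕ → ℝ × ℝ) (hS : IsSeed n k A B) :
    (let Astar := (seedMap n k (A, B)).1
     let Bstar := (seedMap n k (A, B)).2
     -- the construction of B*_n
     (A 1 ≠ Astar 2 ∧ Astar n ≠ Astar 1 ∧
       det2 (Astar 2 - A 1) (Astar 1 - Astar n) ≠ 0 ∧
       ∀ P : ℝ × ℝ,
         (onLine (A 1) (Astar 2) P ∧ onLine (Astar n) (Astar 1) P) ↔ P = Bstar n) ∧
     -- the construction of B*_j for j = n-1, …, n-k+1
     (∀ j : ℕ, n - k + 1 ≤ j → j < n →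
       A (j + 1) ≠ Bstar (j + 1) ∧ Astar j ≠ Astar (j + 1) ∧
       det2 (Bstar (j + 1) - A (j + 1)) (Astar (j + 1) - Astar j) ≠ 0 ∧
       ∀ P : ℝ × ℝ,
         (onLine (A (j + 1)) (Bstar (j + 1)) P ∧ onLine (Astar j) (Astar (j + 1)) P) ↔
           P = Bstar j) ∧
     -- the image is again a seed of type (n,k)
     IsSeed n k Astar Bstar) := by
  intro Astar Bstar
  obtain ⟨hA, hB⟩ := hS
  have hn1 : 1 ≤ n := by omega
  have hm1 : 1 ≤ n - k := by omega
  have hAstarDef : ∀ i, Astar i = if i ≤ n - k then A (i + 1) else B i := fun _ => rfl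
  have hBstarDef : ∀ j, Bstar j = BstAux n A Astar (n - j) := fun _ => rfl
  -- characterization of Astar points as boundary points
  have hchar : ∀ p, 1 ≤ p → p ≤ n → ∃ e : ℕ, ∃ s : ℝ,
      Astar p = segp (Aw n A e) (Aw n A (e+1)) s ∧ 2 ≤ e ∧ e ≤ n ∧ 0 ≤ s ∧ s < 1 ∧
      (p ≤ n - k → e = p + 1 ∧ s = 0) ∧ (n - k < p → e = p ∧ 0 < s) := by
    intro p hp1 hpn
    by_cases hp : p ≤ n - k
    · refine ⟨p+1, 0, ?_, by omega, by omega, le_refl 0, by norm_num,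
        fun _ => ⟨rfl, rfl⟩, fun h => absurd hp (by omega)⟩
      rw [hAstarDef p, if_pos hp, Aw_eq hn1 (by omega) (by omega)]
      simp [segp]
    · push_neg at hp
      obtain ⟨t, ht, hBp⟩ := hB p (by omega) hpn
      refine ⟨p, t, ?_, by omega, hpn, le_of_lt ht.1, ht.2,
        fun h => absurd h (by omega), fun _ => ⟨rfl, ht.1⟩⟩
      rw [hAstarDef p, if_neg (by omega), hBp]
      have e1 : Aw n A p = A p := Aw_eq hn1 hp1 hpn
      have e2 : Aw n A (p+1) = A (p % n + 1) := by
        by_cases hpn' : p < n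
        · rw [Aw_eq hn1 (by omega) (by omega), Nat.mod_eq_of_lt hpn']
        · have hpe : p = n := by omega
          rw [hpe, Nat.mod_self]
          unfold Aw
          rw [show n + 1 - 1 = n by omega, Nat.mod_self]
      simp only [segp, e1, e2]
  -- lexicographic ordering of boundary positions
  have hordered : ∀ p q (ep eq' : ℕ) (sp sq : ℝ), p < q →
      ((p ≤ n - k → ep = p + 1 ∧ sp = 0) ∧ (n - k < p → ep = p ∧ 0 < sp)) →
      ((q ≤ n - k → eq' = q + 1 ∧ sq = 0) ∧ (n - k < q → eq' = q ∧ 0 < sq)) →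
      ep ≤ eq' ∧ (ep < eq' ∨ sp < sq) := by
    intro p q ep eq' sp sq hpq hp hq
    rcases le_or_gt p (n-k) with h1 | h1 <;> rcases le_or_gt q (n-k) with h2 | h2
    · obtain ⟨e1, s1⟩ := hp.1 h1; obtain ⟨e2, s2⟩ := hq.1 h2
      exact ⟨by omega, Or.inl (by omega)⟩
    · obtain ⟨e1, s1⟩ := hp.1 h1; obtain ⟨e2, s2⟩ := hq.2 h2
      rcases Nat.lt_or_ge (p+1) q with h | h
      · exact ⟨by omega, Or.inl (by omega)⟩
      · refine ⟨by omega, Or.inr ?_⟩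
        rw [s1]; exact s2
    · exact absurd hpq (by omega)
    · obtain ⟨e1, s1⟩ := hp.2 h1; obtain ⟨e2, s2⟩ := hq.2 h2
      exact ⟨by omega, Or.inl (by omega)⟩
  -- convexity of the new points
  have hconv : ConvexCyc n Astar := by
    intro i j l hi hij hjl hln
    obtain ⟨ei, si, hieq, hi2, hin, hsi0, hsi1, hic⟩ := hchar i (by omega) (by omega)
    obtain ⟨ej, sj, hjeq, hj2, hjn, hsj0, hsj1, hjc⟩ := hchar j (by omega) (by omega)
    obtain ⟨el, sl, hleq, hl2, hln', hsl0, hsl1, hlc⟩ := hchar l (by omega) hln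
    obtain ⟨o1, o2⟩ := hordered i j ei ej si sj hij hic hjc
    obtain ⟨o3, o4⟩ := hordered j l ej el sj sl hjl hjc hlc
    have hei : ei ≤ i + 1 := by
      rcases le_or_gt i (n-k) with h' | h'
      · have := (hic.1 h').1; omega
      · have := (hic.2 h').1; omega
    have h5 : ei + 1 < el ∨ (el = ei + 1 ∧ 0 < sl) := by
      rcases le_or_gt l (n-k) with h | h
      · have := (hlc.1 h).1
        exact Or.inl (by omega)
      · obtain ⟨hel, hsl⟩ := hlc.2 h
        rcases Nat.lt_or_ge (ei+1) el with h' | h'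
        · exact Or.inl h'
        · exact Or.inr ⟨by omega, hsl⟩
    show 0 < det3 (Astar i) (Astar j) (Astar l)
    rw [hieq, hjeq, hleq]
    exact tri_pos hA hn ei ej el si sj sl (by omega) o1 o3 (by omega)
      hsi0 hsi1 hsj0 hsj1 hsl0 hsl1 o2 o4 h5 (Or.inl (by omega))
  -- shifting segment descriptions by one period
  have hshift : ∀ (e : ℕ) (s : ℝ), 1 ≤ e →
      segp (Aw n A e) (Aw n A (e+1)) s = segp (Aw n A (e+n)) (Aw n A (e+n+1)) s := by
    intro e s he
    rw [Aw_shift he, show e + n + 1 = (e+1) + n by omega, Aw_shift (by omega)]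
  have hA1seg : A 1 = segp (Aw n A (n+1)) (Aw n A (n+1+1)) 0 := by
    have e1 : Aw n A (n+1) = A 1 := by
      rw [Aw_eq' hn1 (by omega) (by omega)]
      congr 1; omega
    rw [e1]; simp [segp]
  -- data about Astar 2 and Astar n
  obtain ⟨e2, s2, h2eq, h2a, h2b, hs20, hs21, h2c⟩ := hchar 2 (by omega) (by omega)
  have he2 : (e2 = 3 ∧ s2 = 0) ∨ (e2 = 2 ∧ 0 < s2) := by
    rcases le_or_gt 2 (n-k) with h | h
    · exact Or.inl (h2c.1 h)
    · exact Or.inr (h2c.2 h)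
  have he2' : 2 ≤ e2 ∧ e2 ≤ 3 := by rcases he2 with ⟨h, _⟩ | ⟨h, _⟩ <;> omega
  have h2eq' : Astar 2 = segp (Aw n A (e2+n)) (Aw n A (e2+n+1)) s2 :=
    h2eq.trans (hshift e2 s2 (by omega))
  obtain ⟨en, sn, hneq, hna, hnb, hsn0, hsn1, hnc⟩ := hchar n (by omega) (le_refl n)
  obtain ⟨hen, hsn⟩ := hnc.2 (by omega)
  rw [hen] at hneq
  -- the two sign facts for the first intersection
  have hs0c : 0 < det3 (A 1) (Astar 2) (Astar n) := by
    rw [det3_rot2, hneq, hA1seg, h2eq']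
    refine tri_pos hA hn n (n+1) (e2+n) sn 0 s2 (by omega) (by omega) (by omega) (by omega)
      hsn0 hsn1 (le_refl 0) (by norm_num) hs20 hs21
      (Or.inl (by omega)) (Or.inl (by omega)) (Or.inl (by omega)) ?_
    rcases Nat.lt_or_ge (e2+n+1) (n+n) with h | h
    · exact Or.inl h
    · exact Or.inr ⟨by omega, hsn⟩
  have hs0d : det3 (A 1) (Astar 2) (Astar 1) < 0 := by
    obtain ⟨e1', s1', h1eq, h1a, h1b, hs10, hs11, h1c⟩ := hchar 1 (by omega) (by omega)
    obtain ⟨he1, hse1⟩ := h1c.1 hm1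
    subst he1
    have h1eq' : Astar 1 = segp (Aw n A (2+n)) (Aw n A (2+n+1)) s1' :=
      h1eq.trans (hshift 2 s1' (by omega))
    have hpos : 0 < det3 (A 1) (Astar 1) (Astar 2) := by
      rw [hA1seg, h1eq', h2eq']
      refine tri_pos hA hn (n+1) (2+n) (e2+n) 0 s1' s2 (by omega) (by omega) (by omega)
        (by omega) (le_refl 0) (by norm_num) hs10 hs11 hs20 hs21
        (Or.inl (by omega)) ?_ ?_ (Or.inl (by omega))
      · rcases he2 with ⟨h, _⟩ | ⟨h, hs⟩
        · exact Or.inl (by omega)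
        · refine Or.inr ?_
          rw [hse1]; exact hs
      · rcases he2 with ⟨h, _⟩ | ⟨h, hs⟩
        · exact Or.inl (by omega)
        · exact Or.inr ⟨by omega, hs⟩
    have hsw := det3_swap23 (A 1) (Astar 2) (Astar 1)
    rw [hsw]
    linarith
  -- the sign facts for subsequent intersections
  have hsgnStep : ∀ j : ℕ, n - k + 1 ≤ j → j < n → ∀ (W : ℝ × ℝ) (τ : ℝ), 0 < τ → τ < 1 →
      W = segp (Astar (j+1)) (Astar ((j+1) % n + 1)) τ →
      0 < det3 (A (j+1)) W (Astar j) ∧ det3 (A (j+1)) W (Astar (j+1)) < 0 := by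
    intro j hj1 hj2 W τ hτ0 hτ1 hW
    obtain ⟨ejj, sj, hjeq, hja, hjb, hsj0, hsj1, hjc⟩ := hchar j (by omega) (by omega)
    obtain ⟨hej, hsjp⟩ := hjc.2 (by omega)
    rw [hej] at hjeq
    obtain ⟨ej1, sj1, hj1eq, hj1a, hj1b, hsj10, hsj11, hj1c⟩ := hchar (j+1) (by omega) (by omega)
    obtain ⟨hej1, hsj1p⟩ := hj1c.2 (by omega)
    subst hej1
    have hAj1 : A (j+1) = segp (Aw n A (j+1)) (Aw n A (j+1+1)) 0 := by
      rw [Aw_eq hn1 (by omega) (by omega)]; simp [segp]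
    have claim2 : 0 < det3 (Astar j) (A (j+1)) (Astar (j+1)) := by
      rw [hjeq, hAj1, hj1eq]
      exact tri_pos hA hn j (j+1) (j+1) sj 0 sj1 (by omega) (by omega) (by omega) (by omega)
        hsj0 hsj1 (le_refl 0) (by norm_num) hsj10 hsj11
        (Or.inl (by omega)) (Or.inr hsj1p) (Or.inr ⟨by omega, hsj1p⟩) (Or.inl (by omega))
    have claims : 0 < det3 (A (j+1)) (Astar (j+1)) (Astar ((j+1) % n + 1)) ∧
        0 < det3 (Astar j) (A (j+1)) (Astar ((j+1) % n + 1)) := by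
      by_cases hcase : j + 1 < n
      · have hmod : (j+1) % n + 1 = j+1+1 := by rw [Nat.mod_eq_of_lt hcase]
        rw [hmod]
        obtain ⟨ej2, sj2, hj2eq, hj2a, hj2b, hsj20, hsj21, hj2c⟩ :=
          hchar (j+1+1) (by omega) (by omega)
        obtain ⟨hej2, hsj2p⟩ := hj2c.2 (by omega)
        subst hej2
        constructor
        · rw [hAj1, hj1eq, hj2eq]
          exact tri_pos hA hn (j+1) (j+1) (j+1+1) 0 sj1 sj2 (by omega) (by omega) (by omega)
            (by omega) (le_refl 0) (by norm_num) hsj10 hsj11 hsj20 hsj21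
            (Or.inr hsj1p) (Or.inl (by omega)) (Or.inr ⟨by omega, hsj2p⟩) (Or.inl (by omega))
        · rw [hjeq, hAj1, hj2eq]
          exact tri_pos hA hn j (j+1) (j+1+1) sj 0 sj2 (by omega) (by omega) (by omega)
            (by omega) hsj0 hsj1 (le_refl 0) (by norm_num) hsj20 hsj21
            (Or.inl (by omega)) (Or.inl (by omega)) (Or.inl (by omega)) (Or.inl (by omega))
      · have hje : j + 1 = n := by omega
        have hmod : (j+1) % n + 1 = 1 := by rw [hje, Nat.mod_self]
        rw [hmod]
        obtain ⟨e1', s1', h1eq, h1a, h1b, hs10, hs11, h1c⟩ := hchar 1 (by omega) (by omega)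
        obtain ⟨he1, hse1⟩ := h1c.1 hm1
        subst he1
        have h1eq' : Astar 1 = segp (Aw n A (2+n)) (Aw n A (2+n+1)) s1' :=
          h1eq.trans (hshift 2 s1' (by omega))
        constructor
        · rw [hAj1, hj1eq, h1eq']
          exact tri_pos hA hn (j+1) (j+1) (2+n) 0 sj1 s1' (by omega) (by omega) (by omega)
            (by omega) (le_refl 0) (by norm_num) hsj10 hsj11 hs10 hs11
            (Or.inr hsj1p) (Or.inl (by omega)) (Or.inl (by omega)) (Or.inl (by omega))
        · rw [hjeq, hAj1, h1eq']
          refine tri_pos hA hn j (j+1) (2+n) sj 0 s1' (by omega) (by omega) (by omega)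
            (by omega) hsj0 hsj1 (le_refl 0) (by norm_num) hs10 hs11
            (Or.inl (by omega)) (Or.inl (by omega)) (Or.inl (by omega)) ?_
          rcases Nat.lt_or_ge (2+n+1) (j+n) with h | h
          · exact Or.inl h
          · exact Or.inr ⟨by omega, hsjp⟩
    obtain ⟨claim1, claim3⟩ := claims
    constructor
    · rw [det3_rot2, hW, det3_seg3]
      exact comb_pos claim2 (le_of_lt claim3) (le_of_lt hτ0) hτ1
    · rw [det3_swap23, hW, det3_seg3, det3_abb]
      have h := mul_pos hτ0 claim1
      nlinarith
  -- the inductive construction of the Bstar points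
  have inv : ∀ d : ℕ, d < k → ∃ t : ℝ, t ∈ Set.Ioo (0:ℝ) 1 ∧
      BstAux n A Astar d = segp (Astar (n - d)) (Astar ((n - d) % n + 1)) t := by
    intro d
    induction d with
    | zero =>
      intro _
      obtain ⟨hD, t, ht, heq⟩ := lineInter_seg (A 1) (Astar 2) (Astar n) (Astar 1)
        (mul_neg_of_pos_of_neg hs0c hs0d)
      refine ⟨t, ht, ?_⟩
      rw [show BstAux n A Astar 0 = lineInter (A 1) (Astar 2) (Astar n) (Astar 1) from rfl,
        heq, Nat.sub_zero, Nat.mod_self]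
    | succ d IH =>
      intro hd
      obtain ⟨τ, hτ, hBs⟩ := IH (by omega)
      have hj : n - d = (n - (d+1)) + 1 := by omega
      rw [hj] at hBs
      have hsg := hsgnStep (n - (d+1)) (by omega) (by omega) (BstAux n A Astar d) τ hτ.1 hτ.2 hBs
      obtain ⟨hc, hdd⟩ := hsg
      obtain ⟨hD, t, ht, heq⟩ := lineInter_seg (A ((n - (d+1))+1)) (BstAux n A Astar d)
        (Astar (n - (d+1))) (Astar ((n - (d+1))+1)) (mul_neg_of_pos_of_neg hc hdd)
      refine ⟨t, ht, ?_⟩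
      rw [show BstAux n A Astar (d+1)
          = lineInter (A (n - d)) (BstAux n A Astar d) (Astar (n - d - 1)) (Astar (n - d))
          from rfl, hj, show (n - (d+1)) + 1 - 1 = n - (d+1) from rfl, heq,
        Nat.mod_eq_of_lt (show n - (d+1) < n by omega)]
  -- final assembly
  refine ⟨?_, ?_, ?_⟩
  · have hD0 := (lineInter_seg (A 1) (Astar 2) (Astar n) (Astar 1)
      (mul_neg_of_pos_of_neg hs0c hs0d)).1
    refine ⟨?_, ?_, hD0, ?_⟩
    · intro h
      rw [h, det3_aab] at hs0c
      exact lt_irrefl _ hs0c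
    · intro h
      rw [h] at hs0c
      linarith
    · intro P
      rw [show Bstar n = lineInter (A 1) (Astar 2) (Astar n) (Astar 1) from
        by rw [hBstarDef n, Nat.sub_self]; rfl]
      exact lineInter_unique (A 1) (Astar 2) (Astar n) (Astar 1) hD0 P
  · intro j hj1 hj2
    have hd : n - (j+1) < k := by omega
    obtain ⟨τ, hτ, hBs⟩ := inv (n - (j+1)) hd
    have hj1e : n - (n - (j+1)) = j + 1 := by omega
    rw [hj1e] at hBs
    have hBsj1 : Bstar (j+1) = BstAux n A Astar (n - (j+1)) := hBstarDef (j+1)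
    rw [← hBsj1] at hBs
    obtain ⟨hc, hdd⟩ := hsgnStep j hj1 hj2 (Bstar (j+1)) τ hτ.1 hτ.2 hBs
    have hD := (lineInter_seg (A (j+1)) (Bstar (j+1)) (Astar j) (Astar (j+1))
      (mul_neg_of_pos_of_neg hc hdd)).1
    have hBj : Bstar j = lineInter (A (j+1)) (Bstar (j+1)) (Astar j) (Astar (j+1)) := by
      rw [hBstarDef j, show n - j = (n - (j+1)) + 1 by omega,
        show BstAux n A Astar ((n-(j+1))+1) = lineInter (A (n - (n-(j+1))))
          (BstAux n A Astar (n-(j+1))) (Astar (n - (n-(j+1)) - 1)) (Astar (n - (n-(j+1))))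
          from rfl, hj1e, show j+1-1 = j from rfl, ← hBsj1]
    refine ⟨?_, ?_, hD, ?_⟩
    · intro h
      rw [← h, det3_aab] at hc
      exact lt_irrefl _ hc
    · intro h
      rw [h] at hc
      linarith
    · intro P
      rw [hBj]
      exact lineInter_unique _ _ _ _ hD P
  · refine ⟨hconv, ?_⟩
    intro j hj1 hj2
    obtain ⟨τ, hτ, hBs⟩ := inv (n - j) (by omega)
    have e : n - (n - j) = j := by omega
    rw [e] at hBs
    refine ⟨τ, hτ, ?_⟩
    rw [hBstarDef j]
    exact hBs
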